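/- Let p_x, p_z ∈ [0,1] with p_x + p_z = 1, and m, n, k ∈ ℕ with n + k ≤ m. Define p_abort = ∑_{(n_x,n_z): n_x+n_z ≤ m, (n_x < n or n_z < k)} C(m,n_x)·C(m−n_x,n_z)·2^{m−n_x−n_z}·p_x^{m+n_x−n_z}·p_z^{m−n_x+n_z}, and for each of the C(n+k, k) strings ϑ of length n+k and weight k define P(ϑ) = C(m, n+k) · ∑_{n_x=n}^{m−k} ∑_{n_z=k}^{m−n_x} C(m−n−k, n_x−n)·C(m−k−n_x, n_z−k)·2^{m−n_x−n_z}·p_x^{m+n_x−n_z}·p_z^{m−n_x+n_z}·C(n_x,n)^{−1}·C(n_z,k)^{−1}. Then C(n+k, k) · P(ϑ) + p_abort = 1. -/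

import Mathlib

open Finset Nat
-- symmetric: C(s,a)*C(s-a,b) = C(s,b)*C(s-b,a) for a+b ≤ s
lemma sym_choose {s a b : ℕ} (h : a + b ≤ s) :
    s.choose a * (s - a).choose b = s.choose b * (s - b).choose a := by
  have ha : a ≤ s := le_trans (Nat.le_add_right _ _) h
  have hb : b ≤ s := le_trans (Nat.le_add_left _ _) h
  have hba : b ≤ s - a := by omega
  have hab : a ≤ s - b := by omega
  have key : ∀ x y : ℕ, x + y ≤ s →
      s.choose x * (s - x).choose y * (x.factorial * y.factorial * (s - x - y).factorial)
        = s.factorial := by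
    intro x y hxy
    have h1 := Nat.choose_mul_factorial_mul_factorial (show x ≤ s by omega)
    have h2 := Nat.choose_mul_factorial_mul_factorial (show y ≤ s - x by omega)
    calc s.choose x * (s - x).choose y * (x.factorial * y.factorial * (s - x - y).factorial)
        = s.choose x * x.factorial * ((s - x).choose y * y.factorial * (s - x - y).factorial) := by
          ring
      _ = s.choose x * x.factorial * (s - x).factorial := by rw [h2]
      _ = s.factorial := h1
  have e1 := key a b h
  have e2 := key b a (by omega)
  have : s - b - a = s - a - b := by omega
  rw [this] at e2
  have hpos : 0 < a.factorial * b.factorial * (s - a - b).factorial :=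
    Nat.mul_pos (Nat.mul_pos (Nat.factorial_pos _) (Nat.factorial_pos _)) (Nat.factorial_pos _)
  apply Nat.eq_of_mul_eq_mul_right hpos
  rw [e1]
  rw [show a.factorial * b.factorial = b.factorial * a.factorial from Nat.mul_comm _ _] at e1 ⊢
  rw [e2]

-- trinomial revision: C(s,a)*C(a,b) = C(s,b)*C(s-b,a-b) for b ≤ a ≤ s
lemma rev_choose {s a b : ℕ} (hb : b ≤ a) (ha : a ≤ s) :
    s.choose a * a.choose b = s.choose b * (s - b).choose (a - b) := by
  have h1 := Nat.choose_mul_factorial_mul_factorial ha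
  have h2 := Nat.choose_mul_factorial_mul_factorial hb
  have h3 := Nat.choose_mul_factorial_mul_factorial (show b ≤ s by omega)
  have h4 := Nat.choose_mul_factorial_mul_factorial (show a - b ≤ s - b by omega)
  have hsab : s - b - (a - b) = s - a := by omega
  rw [hsab] at h4
  have hpos : 0 < b.factorial * (a - b).factorial * (s - a).factorial :=
    Nat.mul_pos (Nat.mul_pos (Nat.factorial_pos _) (Nat.factorial_pos _)) (Nat.factorial_pos _)
  apply Nat.eq_of_mul_eq_mul_right hpos
  calc s.choose a * a.choose b * (b.factorial * (a - b).factorial * (s - a).factorial)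
      = s.choose a * (a.choose b * b.factorial * (a - b).factorial) * (s - a).factorial := by ring
    _ = s.choose a * a.factorial * (s - a).factorial := by rw [h2]
    _ = s.factorial := h1
    _ = s.choose b * b.factorial * (s - b).factorial := h3.symm
    _ = s.choose b * b.factorial * ((s - b).choose (a - b) * (a - b).factorial * (s - a).factorial) := by rw [h4]
    _ = s.choose b * (s - b).choose (a - b) * (b.factorial * (a - b).factorial * (s - a).factorial) := by ring

-- main coefficient identity
lemma coeff_id {m n k nx nz : ℕ} (hn : n ≤ nx) (hk : k ≤ nz) (hmx : nx + nz ≤ m) :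
    (n + k).choose k * m.choose (n + k) * (m - n - k).choose (nx - n) *
      (m - k - nx).choose (nz - k)
    = m.choose nx * (m - nx).choose nz * nx.choose n * nz.choose k := by
  have e1 : m.choose nx * nx.choose n = m.choose n * (m - n).choose (nx - n) :=
    rev_choose hn (by omega)
  have e2 : (m - nx).choose nz * nz.choose k = (m - nx).choose k * (m - nx - k).choose (nz - k) :=
    rev_choose hk (by omega)
  have e3 : (m - n).choose (nx - n) * (m - n - (nx - n)).choose k
      = (m - n).choose k * (m - n - k).choose (nx - n) := by
    exact sym_choose (by omega)
  have e4 : m.choose n * (m - n).choose k = m.choose k * (m - k).choose n :=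
    sym_choose (by omega)
  have e5 : m.choose (n + k) * (n + k).choose k = m.choose k * (m - k).choose n := by
    rw [rev_choose (Nat.le_add_left _ _) (by omega)]
    congr 2
    omega
  have h1 : m - n - (nx - n) = m - nx := by omega
  have h2 : m - nx - k = m - k - nx := by omega
  rw [h1] at e3
  calc (n + k).choose k * m.choose (n + k) * (m - n - k).choose (nx - n) * (m - k - nx).choose (nz - k)
      = m.choose k * (m - k).choose n * (m - n - k).choose (nx - n) * (m - k - nx).choose (nz - k) := by
        rw [← e5]; ring
    _ = m.choose n * ((m - n).choose k * (m - n - k).choose (nx - n)) * (m - k - nx).choose (nz - k) := by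
        rw [← e4]; ring
    _ = m.choose n * ((m - n).choose (nx - n) * (m - nx).choose k) * (m - k - nx).choose (nz - k) := by
        rw [e3]
    _ = (m.choose n * (m - n).choose (nx - n)) * ((m - nx).choose k * (m - k - nx).choose (nz - k)) := by
        ring
    _ = m.choose nx * (m - nx).choose nz * nx.choose n * nz.choose k := by
        rw [← e1, ← h2, ← e2]; ring


/-- Normalization identity for the sampling distribution of LCA sifting:
the abort probability plus the C(n+k,k) equal sampling probabilities sum
to one. -/
theorem stmt_16 (px pz : ℝ) (hpx0 : 0 ≤ px) (hpx1 : px ≤ 1) (hpz0 : 0 ≤ pz)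
    (hpz1 : pz ≤ 1) (hsum : px + pz = 1) (m n k : ℕ) (hm : n + k ≤ m)
    (pabort P : ℝ)
    (habort : pabort =
      ∑ p ∈ (Finset.range (m + 1) ×ˢ Finset.range (m + 1)).filter
          (fun p => p.1 + p.2 ≤ m ∧ (p.1 < n ∨ p.2 < k)),
        (m.choose p.1 : ℝ) * ((m - p.1).choose p.2 : ℝ) *
          2 ^ (m - p.1 - p.2) * px ^ (m + p.1 - p.2) * pz ^ (m - p.1 + p.2))
    (hP : P = (m.choose (n + k) : ℝ) *
      ∑ nx ∈ Finset.Icc n (m - k), ∑ nz ∈ Finset.Icc k (m - nx),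
        ((m - n - k).choose (nx - n) : ℝ) * ((m - k - nx).choose (nz - k) : ℝ) *
          2 ^ (m - nx - nz) * px ^ (m + nx - nz) * pz ^ (m - nx + nz) *
          (nx.choose n : ℝ)⁻¹ * (nz.choose k : ℝ)⁻¹) :
    ((n + k).choose k : ℝ) * P + pabort = 1 := by
  set f : ℕ × ℕ → ℝ := fun p =>
    (m.choose p.1 : ℝ) * ((m - p.1).choose p.2 : ℝ) *
      2 ^ (m - p.1 - p.2) * px ^ (m + p.1 - p.2) * pz ^ (m - p.1 + p.2) with hf
  set S : Finset (ℕ × ℕ) := Finset.range (m + 1) ×ˢ Finset.range (m + 1) with hS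
  -- Step A: total sum is 1
  have htot : ∑ p ∈ S.filter (fun p => p.1 + p.2 ≤ m), f p = 1 := by
    have hnest : ∑ p ∈ S.filter (fun p => p.1 + p.2 ≤ m), f p
        = ∑ nx ∈ Finset.range (m + 1), ∑ nz ∈ Finset.range (m - nx + 1), f (nx, nz) := by
      rw [Finset.sum_filter, Finset.sum_product]
      refine Finset.sum_congr rfl fun nx hx => ?_
      rw [Finset.mem_range] at hx
      rw [← Finset.sum_filter]
      congr 1
      ext nz
      simp only [Finset.mem_filter, Finset.mem_range]
      omega
    have hexp : ((px ^ 2) + (pz ^ 2 + 2 * px * pz)) ^ m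
        = ∑ nx ∈ Finset.range (m + 1), ∑ nz ∈ Finset.range (m - nx + 1), f (nx, nz) := by
      rw [add_pow]
      refine Finset.sum_congr rfl fun nx hx => ?_
      rw [Finset.mem_range] at hx
      rw [add_pow, Finset.mul_sum, Finset.sum_mul]
      refine Finset.sum_congr rfl fun nz hz => ?_
      rw [Finset.mem_range] at hz
      have e1 : m + nx - nz = 2 * nx + (m - nx - nz) := by omega
      have e2 : m - nx + nz = 2 * nz + (m - nx - nz) := by omega
      simp only [hf]
      rw [e1, e2, pow_add, pow_add, pow_mul, pow_mul, mul_pow, mul_pow]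
      ring
    have hone : ((px ^ 2) + (pz ^ 2 + 2 * px * pz)) = 1 := by nlinarith [hsum]
    rw [hnest, ← hexp, hone, one_pow]
  -- Step B: split total into good + abort
  have hsplit := Finset.sum_filter_add_sum_filter_not
    (S.filter (fun p => p.1 + p.2 ≤ m)) (fun p => p.1 < n ∨ p.2 < k) f
  rw [Finset.filter_filter, Finset.filter_filter] at hsplit
  -- Step C: good part equals C(n+k,k) * P
  have hgood : ∑ p ∈ S.filter (fun p => p.1 + p.2 ≤ m ∧ ¬(p.1 < n ∨ p.2 < k)), f p
      = ∑ nx ∈ Finset.Icc n (m - k), ∑ nz ∈ Finset.Icc k (m - nx), f (nx, nz) := by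
    have hsub : Finset.Icc n (m - k) ⊆ Finset.range (m + 1) := by
      intro x hx; rw [Finset.mem_Icc] at hx; rw [Finset.mem_range]; omega
    rw [Finset.sum_filter, Finset.sum_product, ← Finset.sum_subset hsub ?hzero]
    · refine Finset.sum_congr rfl fun nx hx => ?_
      rw [Finset.mem_Icc] at hx
      rw [← Finset.sum_filter]
      apply Finset.sum_congr
      · ext nz
        simp only [Finset.mem_filter, Finset.mem_range, Finset.mem_Icc]
        omega
      · intro nz _; rfl
    · intro nx hx hnx
      rw [Finset.mem_range] at hx
      rw [Finset.mem_Icc] at hnx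
      apply Finset.sum_eq_zero
      intro nz _
      rw [if_neg]
      simp only [not_and, not_not, not_or, not_lt]
      omega
  have hPval : ((n + k).choose k : ℝ) * P
      = ∑ nx ∈ Finset.Icc n (m - k), ∑ nz ∈ Finset.Icc k (m - nx), f (nx, nz) := by
    rw [hP, ← mul_assoc, Finset.mul_sum]
    refine Finset.sum_congr rfl fun nx hx => ?_
    rw [Finset.mul_sum]
    refine Finset.sum_congr rfl fun nz hz => ?_
    rw [Finset.mem_Icc] at hx hz
    have hn : n ≤ nx := hx.1
    have hk : k ≤ nz := hz.1
    have hmx : nx + nz ≤ m := by omega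
    have hid := coeff_id (m := m) hn hk hmx
    have hidR : ((n + k).choose k : ℝ) * (m.choose (n + k) : ℝ) *
        ((m - n - k).choose (nx - n) : ℝ) * ((m - k - nx).choose (nz - k) : ℝ)
        = (m.choose nx : ℝ) * ((m - nx).choose nz : ℝ) * (nx.choose n : ℝ) *
          (nz.choose k : ℝ) := by exact_mod_cast congrArg (Nat.cast : ℕ → ℝ) hid
    have hg1 : (nx.choose n : ℝ) ≠ 0 := by
      exact_mod_cast (Nat.choose_pos hn).ne'
    have hg2 : (nz.choose k : ℝ) ≠ 0 := by
      exact_mod_cast (Nat.choose_pos hk).ne'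
    simp only [hf]
    field_simp
    linear_combination (px ^ (m + nx - nz) * pz ^ (m - nx) * pz ^ nz) * hidR
  rw [hPval, ← hgood, habort]
  rw [← htot, ← hsplit]
  ring
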